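/- The polynomial 3x^{10} + x^2 - 4 has exactly 6 roots in ℚ_2 \ {0} (counted without multiplicity). -/

import Mathlib

open Polynomial

lemma int_norm_eq (c : ℤ) (n : ℕ) (h1 : ((2:ℤ)^n) ∣ c) (h2 : ¬ ((2:ℤ)^(n+1)) ∣ c) :
    ‖(c : ℤ_[2])‖ = (2:ℝ)^(-(n:ℤ)) := by
  have hc : c ≠ 0 := by rintro rfl; exact h2 (dvd_zero _)
  have hle : ‖(c : ℤ_[2])‖ ≤ (2:ℝ)^(-(n:ℤ)) := by
    have := (PadicInt.norm_int_le_pow_iff_dvd (p := 2) (k := c) (n := n)).2 (by exact_mod_cast h1)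
    simpa using this
  have hnle : ¬ ‖(c : ℤ_[2])‖ ≤ (2:ℝ)^(-((n:ℤ)+1)) := by
    intro h
    have := (PadicInt.norm_int_le_pow_iff_dvd (p := 2) (k := c) (n := n+1)).1 (by push_cast; exact_mod_cast h)
    exact h2 (by exact_mod_cast this)
  have hne : (c : ℤ_[2]) ≠ 0 := by exact_mod_cast hc
  have hv : ‖(c:ℤ_[2])‖ = (2:ℝ)^(-((c:ℤ_[2]).valuation : ℤ)) := by
    have := PadicInt.norm_eq_zpow_neg_valuation hne
    simpa using this
  rw [hv] at hle hnle ⊢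
  have h2lt : (1:ℝ) < 2 := one_lt_two
  have hv1 : -(c:ℤ_[2]).valuation ≤ -(n:ℤ) := (zpow_le_zpow_iff_right₀ h2lt).1 hle
  have hv2 : -((n:ℤ)+1) < -(c:ℤ_[2]).valuation :=
    lt_of_not_ge fun h => hnle ((zpow_le_zpow_iff_right₀ h2lt).2 h)
  congr 1; omega

lemma norm_eq_of_close {x y : ℤ_[2]} (h : ‖x - y‖ < ‖y‖) : ‖x‖ = ‖y‖ := by
  have hle : ‖x‖ ≤ ‖y‖ := by
    calc ‖x‖ = ‖(x - y) + y‖ := by ring_nf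
    _ ≤ max ‖x - y‖ ‖y‖ := PadicInt.nonarchimedean _ _
    _ ≤ ‖y‖ := max_le (le_of_lt h) le_rfl
  refine le_antisymm hle (le_of_not_gt fun hlt => ?_)
  have : ‖y‖ ≤ max ‖x‖ ‖x - y‖ := by
    calc ‖y‖ = ‖x + -(x - y)‖ := by ring_nf
    _ ≤ max ‖x‖ ‖-(x-y)‖ := PadicInt.nonarchimedean _ _
    _ = max ‖x‖ ‖x - y‖ := by rw [norm_neg]
  exact absurd (lt_of_le_of_lt this (max_lt hlt h)) (lt_irrefl _)

lemma root_near (r : ℤ) (k : ℕ) (hk : 0 < k) (h2k : 2*k < 48)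
    (hdvd : ((2:ℤ)^48) ∣ (3*r^10 + r^2 - 4))
    (hnd : ¬ ((2:ℤ)^k) ∣ (30*r^9 + 2*r)) :
    ∃ z : ℤ_[2], 3*z^10 + z^2 - 4 = 0 ∧ ‖z - r‖ ≤ (2:ℝ)^(-(48:ℤ)+k) := by
  set F : Polynomial ℤ_[2] := C 3 * X ^ 10 + X ^ 2 - C 4 with hF
  have hev : ∀ z : ℤ_[2], F.eval z = 3*z^10 + z^2 - 4 := fun z => by simp [hF]
  have hev' : ∀ z : ℤ_[2], F.derivative.eval z = 30*z^9 + 2*z := fun z => by simp [hF]; ring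
  set a₀ : ℤ_[2] := (r : ℤ_[2]) with ha₀
  have hFa : ‖F.eval a₀‖ ≤ (2:ℝ)^(-(48:ℤ)) := by
    have : F.eval a₀ = ((3*r^10 + r^2 - 4 : ℤ) : ℤ_[2]) := by rw [hev]; push_cast; ring
    rw [this]
    have := (PadicInt.norm_int_le_pow_iff_dvd (p := 2) (k := 3*r^10 + r^2 - 4) (n := 48)).2
      (by exact_mod_cast hdvd)
    simpa using this
  have hF'cast : F.derivative.eval a₀ = ((30*r^9 + 2*r : ℤ) : ℤ_[2]) := by
    rw [hev']; push_cast; ring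
  have hF'lb : (2:ℝ)^(-(k:ℤ)) < ‖F.derivative.eval a₀‖ := by
    rw [hF'cast]
    by_contra h
    push_neg at h
    have := (PadicInt.norm_int_le_pow_iff_dvd (p := 2) (k := 30*r^9 + 2*r) (n := k)).1
      (by simpa using h)
    exact hnd (by exact_mod_cast this)
  have hnorm : ‖F.eval a₀‖ < ‖F.derivative.eval a₀‖ ^ 2 := by
    calc ‖F.eval a₀‖ ≤ (2:ℝ)^(-(48:ℤ)) := hFa
    _ < (2:ℝ)^(-(k:ℤ)-(k:ℤ)) := by
        apply zpow_lt_zpow_right₀ one_lt_two; omega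
    _ = ((2:ℝ)^(-(k:ℤ)))^2 := by rw [← zpow_natCast ((2:ℝ)^(-(k:ℤ)))]; rw [← zpow_mul]; ring_nf
    _ ≤ ‖F.derivative.eval a₀‖^2 := by
        apply pow_le_pow_left₀ (by positivity) (le_of_lt hF'lb)
  obtain ⟨z, hz0, hz1, -, -⟩ := hensels_lemma (p := 2) hnorm
  refine ⟨z, by rw [← hev]; exact hz0, ?_⟩
  set d := z - a₀ with hd
  obtain ⟨c, hc⟩ := F.binomExpansion a₀ d
  rw [show a₀ + d = z by ring] at hc
  rw [show F.eval z = 0 from hz0] at hc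
  have key : F.eval a₀ = -(F.derivative.eval a₀ + c * d) * d := by
    rw [eq_comm, neg_mul, neg_eq_iff_eq_neg]
    linear_combination -hc
  have hnG : ‖F.derivative.eval a₀ + c*d‖ = ‖F.derivative.eval a₀‖ := by
    apply norm_eq_of_close
    rw [show F.derivative.eval a₀ + c*d - F.derivative.eval a₀ = c*d by ring, norm_mul]
    calc ‖c‖ * ‖d‖ ≤ 1 * ‖d‖ := by
          apply mul_le_mul_of_nonneg_right (PadicInt.norm_le_one c) (norm_nonneg d)
    _ = ‖d‖ := one_mul _
    _ < ‖F.derivative.eval a₀‖ := hz1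
  have hprod : ‖F.derivative.eval a₀‖ * ‖d‖ ≤ (2:ℝ)^(-(48:ℤ)) := by
    calc ‖F.derivative.eval a₀‖ * ‖d‖ = ‖F.eval a₀‖ := by
          rw [key, neg_mul, norm_neg, norm_mul, hnG]
    _ ≤ _ := hFa
  have hdle : ‖d‖ ≤ (2:ℝ)^(-(48:ℤ)+k) := by
    have hpos : (0:ℝ) < (2:ℝ)^(-(k:ℤ)) := by positivity
    have h1 : (2:ℝ)^(-(k:ℤ)) * ‖d‖ ≤ (2:ℝ)^(-(48:ℤ)) := by
      calc (2:ℝ)^(-(k:ℤ)) * ‖d‖ ≤ ‖F.derivative.eval a₀‖ * ‖d‖ := by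
            apply mul_le_mul_of_nonneg_right (le_of_lt hF'lb) (norm_nonneg d)
      _ ≤ _ := hprod
    have := (le_div_iff₀' hpos).2 h1
    calc ‖d‖ ≤ (2:ℝ)^(-(48:ℤ)) / (2:ℝ)^(-(k:ℤ)) := this
    _ = (2:ℝ)^(-(48:ℤ)+k) := by
        rw [← zpow_sub₀ (by norm_num : (2:ℝ) ≠ 0)]; ring_nf
  exact hdle

lemma qnorm_eq_of_close {x y : ℚ_[2]} (h : ‖x - y‖ < ‖y‖) : ‖x‖ = ‖y‖ := by
  have hle : ‖x‖ ≤ ‖y‖ := by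
    calc ‖x‖ = ‖(x - y) + y‖ := by ring_nf
    _ ≤ max ‖x - y‖ ‖y‖ := Padic.nonarchimedean _ _
    _ ≤ ‖y‖ := max_le (le_of_lt h) le_rfl
  refine le_antisymm hle (le_of_not_gt fun hlt => ?_)
  have : ‖y‖ ≤ max ‖x‖ ‖x - y‖ := by
    calc ‖y‖ = ‖x + -(x - y)‖ := by ring_nf
    _ ≤ max ‖x‖ ‖-(x-y)‖ := Padic.nonarchimedean _ _
    _ = max ‖x‖ ‖x - y‖ := by rw [norm_neg]
  exact absurd (lt_of_le_of_lt this (max_lt hlt h)) (lt_irrefl _)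

lemma qint_norm_eq (c : ℤ) (n : ℕ) (h1 : ((2:ℤ)^n) ∣ c) (h2 : ¬ ((2:ℤ)^(n+1)) ∣ c) :
    ‖(c : ℚ_[2])‖ = (2:ℝ)^(-(n:ℤ)) := by
  rw [← PadicInt.coe_intCast (p := 2), PadicInt.padic_norm_e_of_padicInt]
  exact int_norm_eq c n h1 h2

lemma close_norm {x : ℤ_[2]} {r e : ℤ} {n m : ℕ} (hx : ‖x - (r:ℤ_[2])‖ ≤ (2:ℝ)^(-(m:ℤ)))
    (h1 : ((2:ℤ)^n) ∣ (r - e)) (h2 : ¬((2:ℤ)^(n+1)) ∣ (r - e)) (hnm : n < m) :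
    ‖x - (e:ℤ_[2])‖ = (2:ℝ)^(-(n:ℤ)) := by
  have hre : ‖((r - e : ℤ) : ℤ_[2])‖ = (2:ℝ)^(-(n:ℤ)) := int_norm_eq _ n h1 h2
  have hxe : x - (e:ℤ_[2]) - ((r - e : ℤ) : ℤ_[2]) = x - (r:ℤ_[2]) := by push_cast; ring
  rw [← hre]
  apply norm_eq_of_close
  rw [hxe, hre]
  calc ‖x - (r:ℤ_[2])‖ ≤ (2:ℝ)^(-(m:ℤ)) := hx
  _ < (2:ℝ)^(-(n:ℤ)) := by apply zpow_lt_zpow_right₀ one_lt_two; omega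

lemma key_facts : ∃ α β : ℚ_[2],
    (3*α^10 + α^2 - 4 = 0) ∧ (3*β^10 + β^2 - 4 = 0) ∧
    ‖α‖ = 1 ∧ ‖α - 1‖ = (2:ℝ)^(-(2:ℤ)) ∧ ‖α + 1‖ = (2:ℝ)^(-(1:ℤ)) ∧
    ‖β‖ = (2:ℝ)^(-(1:ℤ)) ∧
    ‖(-3*(α^2)^2 - 2*(α^2)*(β^2) - 3*(β^2)^2 - 2*(α^2) - 2*(β^2) - 3) - 24‖ ≤ (2:ℝ)^(-(5:ℤ)) := by
  obtain ⟨a, ha, hac⟩ := root_near 4746739773469 6 (by norm_num) (by norm_num)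
    (by norm_num) (by decide)
  obtain ⟨b, hb, hbc⟩ := root_near 19367539162370 3 (by norm_num) (by norm_num)
    (by norm_num) (by decide)
  have hac' : ‖a - ((4746739773469:ℤ):ℤ_[2])‖ ≤ (2:ℝ)^(-(42:ℤ)) := by
    have : (-(48:ℤ)+6) = (-(42:ℤ)) := by norm_num
    rw [← this]; exact_mod_cast hac
  have hbc' : ‖b - ((19367539162370:ℤ):ℤ_[2])‖ ≤ (2:ℝ)^(-(45:ℤ)) := by
    have : (-(48:ℤ)+3) = (-(45:ℤ)) := by norm_num
    rw [← this]; exact_mod_cast hbc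
  -- norms of a, a±1, b
  have hna : ‖a - ((0:ℤ):ℤ_[2])‖ = (2:ℝ)^(-(0:ℤ)) :=
    close_norm (n := 0) (m := 42) hac' (by norm_num) (by norm_num) (by norm_num)
  have hna1 : ‖a - ((1:ℤ):ℤ_[2])‖ = (2:ℝ)^(-(2:ℤ)) :=
    close_norm (n := 2) (m := 42) hac' (by norm_num) (by norm_num) (by norm_num)
  have hnam1 : ‖a - ((-1:ℤ):ℤ_[2])‖ = (2:ℝ)^(-(1:ℤ)) :=
    close_norm (n := 1) (m := 42) hac' (by norm_num) (by norm_num) (by norm_num)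
  have hnb : ‖b - ((0:ℤ):ℤ_[2])‖ = (2:ℝ)^(-(1:ℤ)) :=
    close_norm (n := 1) (m := 45) hbc' (by norm_num) (by norm_num) (by norm_num)
  -- Delta bound in ℤ_[2]
  set A : ℤ_[2] := a^2 with hA
  set B : ℤ_[2] := b^2 with hB
  have hAc : ‖A - ((22531538477032533436293961:ℤ):ℤ_[2])‖ ≤ (2:ℝ)^(-(42:ℤ)) := by
    have hfac : A - ((22531538477032533436293961:ℤ):ℤ_[2])
        = (a - ((4746739773469:ℤ):ℤ_[2])) * (a + ((4746739773469:ℤ):ℤ_[2])) := by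
      rw [hA]; push_cast; ring
    rw [hfac, norm_mul]
    calc ‖a - ((4746739773469:ℤ):ℤ_[2])‖ * ‖a + ((4746739773469:ℤ):ℤ_[2])‖
        ≤ ‖a - ((4746739773469:ℤ):ℤ_[2])‖ * 1 :=
          mul_le_mul_of_nonneg_left (PadicInt.norm_le_one _) (norm_nonneg _)
    _ ≤ (2:ℝ)^(-(42:ℤ)) := by rw [mul_one]; exact hac'
  have hBc : ‖B - ((375101573205935641224016900:ℤ):ℤ_[2])‖ ≤ (2:ℝ)^(-(45:ℤ)) := by
    have hfac : B - ((375101573205935641224016900:ℤ):ℤ_[2])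
        = (b - ((19367539162370:ℤ):ℤ_[2])) * (b + ((19367539162370:ℤ):ℤ_[2])) := by
      rw [hB]; push_cast; ring
    rw [hfac, norm_mul]
    calc ‖b - ((19367539162370:ℤ):ℤ_[2])‖ * ‖b + ((19367539162370:ℤ):ℤ_[2])‖
        ≤ ‖b - ((19367539162370:ℤ):ℤ_[2])‖ * 1 :=
          mul_le_mul_of_nonneg_left (PadicInt.norm_le_one _) (norm_nonneg _)
    _ ≤ (2:ℝ)^(-(45:ℤ)) := by rw [mul_one]; exact hbc'
  set Δ : ℤ_[2] := -3*A^2 - 2*A*B - 3*B^2 - 2*A - 2*B - 3 with hΔ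
  have hsplit : Δ - ((-440529812402099626471720182853234969281158846256542088:ℤ):ℤ_[2])
      = (A - ((22531538477032533436293961:ℤ):ℤ_[2]))
          * (-3*(A + ((22531538477032533436293961:ℤ):ℤ_[2])) - 2*B - 2)
        + (B - ((375101573205935641224016900:ℤ):ℤ_[2]))
          * (-2*((22531538477032533436293961:ℤ):ℤ_[2])
             - 3*(B + ((375101573205935641224016900:ℤ):ℤ_[2])) - 2) := by
    rw [hΔ]; push_cast; ring
  have hΔ0 : ‖Δ - ((-440529812402099626471720182853234969281158846256542088:ℤ):ℤ_[2])‖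
      ≤ (2:ℝ)^(-(42:ℤ)) := by
    rw [hsplit]
    refine le_trans (PadicInt.nonarchimedean _ _) (max_le ?_ ?_)
    · rw [norm_mul]
      calc _ ≤ ‖A - ((22531538477032533436293961:ℤ):ℤ_[2])‖ * 1 :=
            mul_le_mul_of_nonneg_left (PadicInt.norm_le_one _) (norm_nonneg _)
      _ ≤ (2:ℝ)^(-(42:ℤ)) := by rw [mul_one]; exact hAc
    · rw [norm_mul]
      calc _ ≤ ‖B - ((375101573205935641224016900:ℤ):ℤ_[2])‖ * 1 :=
            mul_le_mul_of_nonneg_left (PadicInt.norm_le_one _) (norm_nonneg _)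
      _ ≤ (2:ℝ)^(-(45:ℤ)) := by rw [mul_one]; exact hBc
      _ ≤ (2:ℝ)^(-(42:ℤ)) := by apply zpow_le_zpow_right₀ one_le_two; norm_num
  have hΔ24 : ‖Δ - ((24:ℤ):ℤ_[2])‖ ≤ (2:ℝ)^(-(5:ℤ)) := by
    have hsum : Δ - ((24:ℤ):ℤ_[2])
        = (Δ - ((-440529812402099626471720182853234969281158846256542088:ℤ):ℤ_[2]))
          + ((-440529812402099626471720182853234969281158846256542112:ℤ):ℤ_[2]) := by
      push_cast; ring
    rw [hsum]
    refine le_trans (PadicInt.nonarchimedean _ _) (max_le ?_ ?_)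
    · exact hΔ0.trans (by apply zpow_le_zpow_right₀ one_le_two; norm_num)
    · have := (PadicInt.norm_int_le_pow_iff_dvd (p := 2)
        (k := -440529812402099626471720182853234969281158846256542112) (n := 5)).2
        (by norm_num)
      simpa using this
  -- move to ℚ_[2]
  refine ⟨(a : ℚ_[2]), (b : ℚ_[2]), ?_, ?_, ?_, ?_, ?_, ?_, ?_⟩
  · exact_mod_cast congrArg (PadicInt.Coe.ringHom (p := 2)) ha
  · exact_mod_cast congrArg (PadicInt.Coe.ringHom (p := 2)) hb
  · have : ‖(a:ℚ_[2]) - ((0:ℤ):ℚ_[2])‖ = (2:ℝ)^(-(0:ℤ)) := by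
      rw [show (a:ℚ_[2]) - ((0:ℤ):ℚ_[2]) = (((a - ((0:ℤ):ℤ_[2])) : ℤ_[2]) : ℚ_[2]) by push_cast; ring,
        PadicInt.padic_norm_e_of_padicInt]; exact hna
    simpa using this
  · have : ‖(a:ℚ_[2]) - ((1:ℤ):ℚ_[2])‖ = (2:ℝ)^(-(2:ℤ)) := by
      rw [show (a:ℚ_[2]) - ((1:ℤ):ℚ_[2]) = (((a - ((1:ℤ):ℤ_[2])) : ℤ_[2]) : ℚ_[2]) by push_cast; ring,
        PadicInt.padic_norm_e_of_padicInt]; exact hna1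
    simpa using this
  · have : ‖(a:ℚ_[2]) - ((-1:ℤ):ℚ_[2])‖ = (2:ℝ)^(-(1:ℤ)) := by
      rw [show (a:ℚ_[2]) - ((-1:ℤ):ℚ_[2]) = (((a - ((-1:ℤ):ℤ_[2])) : ℤ_[2]) : ℚ_[2]) by push_cast; ring,
        PadicInt.padic_norm_e_of_padicInt]; exact hnam1
    simpa using this
  · have : ‖(b:ℚ_[2]) - ((0:ℤ):ℚ_[2])‖ = (2:ℝ)^(-(1:ℤ)) := by
      rw [show (b:ℚ_[2]) - ((0:ℤ):ℚ_[2]) = (((b - ((0:ℤ):ℤ_[2])) : ℤ_[2]) : ℚ_[2]) by push_cast; ring,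
        PadicInt.padic_norm_e_of_padicInt]; exact hnb
    simpa using this
  · have h1 : ‖((Δ - ((24:ℤ):ℤ_[2]) : ℤ_[2]) : ℚ_[2])‖ ≤ (2:ℝ)^(-(5:ℤ)) := by
      rw [PadicInt.padic_norm_e_of_padicInt]; exact hΔ24
    have hcast : ((Δ - ((24:ℤ):ℤ_[2]) : ℤ_[2]) : ℚ_[2])
        = (-3*(((a:ℚ_[2]))^2)^2 - 2*(((a:ℚ_[2]))^2)*(((b:ℚ_[2]))^2) - 3*(((b:ℚ_[2]))^2)^2
           - 2*(((a:ℚ_[2]))^2) - 2*(((b:ℚ_[2]))^2) - 3) - 24 := by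
      rw [hΔ, hA, hB]
      push_cast [show ((3:ℤ_[2]):ℚ_[2]) = 3 from rfl, show ((24:ℤ_[2]):ℚ_[2]) = 24 from rfl, show ((2:ℤ_[2]):ℚ_[2]) = 2 from rfl]
      ring
    rw [← hcast]; exact h1

/-- The polynomial `3x¹⁰ + x² - 4` has exactly `6` nonzero roots in `ℚ₂`. -/
theorem stmt12 :
    {x : ℚ_[2] | x ≠ 0 ∧ 3 * x ^ 10 + x ^ 2 - 4 = 0}.ncard = 6 := by
  obtain ⟨α, β, hαr, hβr, hnα, hnα1, hnαm1, hnβ, hΔ⟩ := key_facts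
  have hα0 : α ≠ 0 := by intro h; rw [h] at hnα; norm_num at hnα
  have hβ0 : β ≠ 0 := by intro h; rw [h] at hnβ; norm_num at hnβ
  have hα1 : α ≠ 1 := by intro h; rw [h] at hnα1; norm_num at hnα1
  have hαm1 : α ≠ -1 := by intro h; rw [h] at hnαm1; norm_num at hnαm1
  have hβ1 : β ≠ 1 := by intro h; rw [h] at hnβ; norm_num at hnβ
  have hβm1 : β ≠ -1 := by intro h; rw [h] at hnβ; norm_num at hnβ
  have hβα : β ≠ α := by intro h; rw [h, hnα] at hnβ; norm_num at hnβ
  have hβmα : β ≠ -α := by intro h; rw [h, norm_neg, hnα] at hnβ; norm_num at hnβ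
  have hαmα : α ≠ -α := by
    intro h
    have h2 : (2:ℚ_[2]) * α = 0 := by linear_combination h
    rcases mul_eq_zero.1 h2 with h | h
    · norm_num at h
    · exact hα0 h
  have hβmβ : β ≠ -β := by
    intro h
    have h2 : (2:ℚ_[2]) * β = 0 := by linear_combination h
    rcases mul_eq_zero.1 h2 with h | h
    · norm_num at h
    · exact hβ0 h
  -- norms of squares
  have hnA : ‖α^2‖ = 1 := by rw [norm_pow, hnα]; norm_num
  have hnB : ‖β^2‖ = (2:ℝ)^(-(2:ℤ)) := by
    rw [norm_pow, hnβ, ← zpow_natCast ((2:ℝ)^(-(1:ℤ))), ← zpow_mul]; norm_num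
  have hA1 : α^2 ≠ 1 := by
    intro h
    have : (α - 1) * (α + 1) = 0 := by linear_combination h
    rcases mul_eq_zero.1 this with h' | h'
    · exact hα1 (by linear_combination h')
    · exact hαm1 (by linear_combination h')
  have hB1 : β^2 ≠ 1 := by
    intro h; rw [h] at hnB; norm_num at hnB
  have hAB : α^2 ≠ β^2 := by
    intro h; rw [h, hnB] at hnA; norm_num at hnA
  -- h(A) = 0, h(B) = 0
  have hhA : 3*(α^2)^4 + 3*(α^2)^3 + 3*(α^2)^2 + 3*(α^2) + 4 = 0 := by
    have hfac : (α^2 - 1) * (3*(α^2)^4 + 3*(α^2)^3 + 3*(α^2)^2 + 3*(α^2) + 4) = 0 := by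
      linear_combination hαr
    exact (mul_eq_zero.1 hfac).resolve_left (sub_ne_zero.2 hA1)
  have hhB : 3*(β^2)^4 + 3*(β^2)^3 + 3*(β^2)^2 + 3*(β^2) + 4 = 0 := by
    have hfac : (β^2 - 1) * (3*(β^2)^4 + 3*(β^2)^3 + 3*(β^2)^2 + 3*(β^2) + 4) = 0 := by
      linear_combination hβr
    exact (mul_eq_zero.1 hfac).resolve_left (sub_ne_zero.2 hB1)
  -- norm of Δ
  have h24 : ‖(24:ℚ_[2])‖ = (2:ℝ)^(-(3:ℤ)) := by
    have := qint_norm_eq 24 3 (by norm_num) (by norm_num)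
    simpa using this
  have hΔn : ‖(-3*(α^2)^2 - 2*(α^2)*(β^2) - 3*(β^2)^2 - 2*(α^2) - 2*(β^2) - 3)‖
      = (2:ℝ)^(-(3:ℤ)) := by
    rw [← h24]
    apply qnorm_eq_of_close
    rw [h24]
    calc ‖(-3*(α^2)^2 - 2*(α^2)*(β^2) - 3*(β^2)^2 - 2*(α^2) - 2*(β^2) - 3) - 24‖
        ≤ (2:ℝ)^(-(5:ℤ)) := hΔ
    _ < (2:ℝ)^(-(3:ℤ)) := by apply zpow_lt_zpow_right₀ one_lt_two; norm_num
  -- set equality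
  have hS : {x : ℚ_[2] | x ≠ 0 ∧ 3 * x ^ 10 + x ^ 2 - 4 = 0}
      = ({1, -1, α, -α, β, -β} : Set ℚ_[2]) := by
    ext x
    simp only [Set.mem_setOf_eq, Set.mem_insert_iff, Set.mem_singleton_iff]
    constructor
    · rintro ⟨hx0, hx⟩
      have hfac : (x^2 - 1) * (3*(x^2)^4 + 3*(x^2)^3 + 3*(x^2)^2 + 3*(x^2) + 4) = 0 := by
        linear_combination hx
      rcases mul_eq_zero.1 hfac with h | hht
      · have h2 : (x - 1) * (x + 1) = 0 := by linear_combination h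
        rcases mul_eq_zero.1 h2 with h' | h'
        · exact Or.inl (by linear_combination h')
        · exact Or.inr (Or.inl (by linear_combination h'))
      · by_cases htA : x^2 = α^2
        · have h2 : (x - α) * (x + α) = 0 := by linear_combination htA
          rcases mul_eq_zero.1 h2 with h' | h'
          · exact Or.inr (Or.inr (Or.inl (by linear_combination h')))
          · exact Or.inr (Or.inr (Or.inr (Or.inl (by linear_combination h'))))
        by_cases htB : x^2 = β^2
        · have h2 : (x - β) * (x + β) = 0 := by linear_combination htB
          rcases mul_eq_zero.1 h2 with h' | h'
          · exact Or.inr (Or.inr (Or.inr (Or.inr (Or.inl (by linear_combination h')))))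
          · exact Or.inr (Or.inr (Or.inr (Or.inr (Or.inr (by linear_combination h')))))
        · exfalso
          have hgA : (x^2 - α^2) * (3*((x^2)^3 + (x^2)^2*(α^2) + (x^2)*(α^2)^2 + (α^2)^3)
              + 3*((x^2)^2 + (x^2)*(α^2) + (α^2)^2) + 3*(x^2 + α^2) + 3) = 0 := by
            linear_combination hht - hhA
          have hgA' := (mul_eq_zero.1 hgA).resolve_left (sub_ne_zero.2 htA)
          have hgB : (x^2 - β^2) * (3*((x^2)^3 + (x^2)^2*(β^2) + (x^2)*(β^2)^2 + (β^2)^3)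
              + 3*((x^2)^2 + (x^2)*(β^2) + (β^2)^2) + 3*(x^2 + β^2) + 3) = 0 := by
            linear_combination hht - hhB
          have hgB' := (mul_eq_zero.1 hgB).resolve_left (sub_ne_zero.2 htB)
          have hquad : ((3:ℚ_[2])*(α^2 - β^2)) * ((x^2)^2 + (1 + α^2 + β^2)*(x^2)
              + ((α^2)^2 + (α^2)*(β^2) + (β^2)^2 + α^2 + β^2 + 1)) = 0 := by
            linear_combination hgA' - hgB'
          have h3 : (3:ℚ_[2]) ≠ 0 := by norm_num
          have hq := (mul_eq_zero.1 hquad).resolve_left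
            (mul_ne_zero h3 (sub_ne_zero.2 hAB))
          set y : ℚ_[2] := 2*x^2 + 1 + α^2 + β^2 with hy
          have hysq : y^2 = -3*(α^2)^2 - 2*(α^2)*(β^2) - 3*(β^2)^2 - 2*(α^2) - 2*(β^2) - 3 := by
            rw [hy]; linear_combination 4*hq
          have hyn : ‖y^2‖ = (2:ℝ)^(-(3:ℤ)) := by rw [hysq]; exact hΔn
          have hyne : y ≠ 0 := by
            intro h; rw [h] at hyn; norm_num at hyn
          have hval : ‖y‖ = (2:ℝ)^(-y.valuation) := by
            have := Padic.norm_eq_zpow_neg_valuation (p := 2) hyne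
            simpa using this
          rw [norm_pow, hval, ← zpow_natCast ((2:ℝ)^(-y.valuation)), ← zpow_mul] at hyn
          have he : -y.valuation * (2:ℕ) = -(3:ℤ) := by
            have h2lt : (1:ℝ) < 2 := one_lt_two
            have h1 : -y.valuation * (2:ℕ) ≤ -(3:ℤ) := (zpow_le_zpow_iff_right₀ h2lt).1 hyn.le
            have h2 : -(3:ℤ) ≤ -y.valuation * (2:ℕ) := (zpow_le_zpow_iff_right₀ h2lt).1 hyn.ge
            omega
          simp only [Nat.cast_ofNat] at he
          omega
    · rintro (rfl | rfl | rfl | rfl | rfl | rfl)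
      · exact ⟨one_ne_zero, by norm_num⟩
      · exact ⟨by norm_num, by norm_num⟩
      · exact ⟨hα0, hαr⟩
      · exact ⟨neg_ne_zero.2 hα0, by linear_combination hαr⟩
      · exact ⟨hβ0, hβr⟩
      · exact ⟨neg_ne_zero.2 hβ0, by linear_combination hβr⟩
  rw [hS]
  have h1 : (1:ℚ_[2]) ∉ ({-1, α, -α, β, -β} : Set ℚ_[2]) := by
    simp only [Set.mem_insert_iff, Set.mem_singleton_iff]
    push_neg
    exact ⟨by norm_num, Ne.symm hα1, fun h => hαm1 (by linear_combination h),
      Ne.symm hβ1, fun h => hβm1 (by linear_combination h)⟩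
  have h2 : (-1:ℚ_[2]) ∉ ({α, -α, β, -β} : Set ℚ_[2]) := by
    simp only [Set.mem_insert_iff, Set.mem_singleton_iff]
    push_neg
    exact ⟨Ne.symm hαm1, fun h => hα1 (by linear_combination h),
      Ne.symm hβm1, fun h => hβ1 (by linear_combination h)⟩
  have h3 : α ∉ ({-α, β, -β} : Set ℚ_[2]) := by
    simp only [Set.mem_insert_iff, Set.mem_singleton_iff]
    push_neg
    exact ⟨hαmα, Ne.symm hβα, fun h => hβmα (by linear_combination h)⟩
  have h4 : -α ∉ ({β, -β} : Set ℚ_[2]) := by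
    simp only [Set.mem_insert_iff, Set.mem_singleton_iff]
    push_neg
    exact ⟨Ne.symm hβmα, fun h => hβα (by linear_combination h)⟩
  rw [Set.ncard_insert_of_notMem h1 (Set.toFinite _),
    Set.ncard_insert_of_notMem h2 (Set.toFinite _),
    Set.ncard_insert_of_notMem h3 (Set.toFinite _),
    Set.ncard_insert_of_notMem h4 (Set.toFinite _),
    Set.ncard_pair hβmβ]
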